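/- (Theorem 2, output-shunt-resistor design.) Fix reals D ∈ (0,1], L > 0, C > 0, P > 0, V̄₁ > 0, V̄₂ > 0 and a shunt resistance R_s > 0. For feedback gains f₁, f₂ ∈ ℝ² and R > 0 define the real 4×4 closed-loop matrix Ã(R) with rows: row 1 = (−D·R/L + V̄₁·f₁₁/L, −1/L + V̄₁·f₁₂/L, −D·R/L, 0); row 2 = (1/C, P/(C·V̄₁²) − 1/(C·R_s), 0, 0); row 3 = (−D·R/L, 0, −2·D·R/L + V̄₂·f₂₁/L, −1/L + V̄₂·f₂₂/L); row 4 = (0, 0, 1/C, P/(C·V̄₂²) − 1/(C·R_s)). Then: (a) if P/(C·V̄ᵢ²) − 1/(C·R_s) > 0 for i = 1, 2, then for all feedback gains f₁, f₂ ∈ ℝ² such that the standalone blocks Mᵢ = [[V̄ᵢ·f_{i1}/L, −1/L + V̄ᵢ·f_{i2}/L], [1/C, P/(C·V̄ᵢ²) − 1/(C·R_s)]] are Hurwitz, there exists R > 0 such that Ã(R) is not Hurwitz; and (b) if instead 1/R_s > P/V̄ᵢ² for i = 1, 2, then the steady-state power dissipated in each shunt resistor satisfies V̄ᵢ²/R_s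 > P, i.e., the power lost in each shunt exceeds the load power, so at least half of the total power is dissipated in the shunt resistors. -/

import Mathlib

/-- A real square matrix is Hurwitz if every complex eigenvalue has strictly
negative real part. -/
def Matrix.IsHurwitz {n : Type*} [Fintype n] [DecidableEq n]
    (M : Matrix n n ℝ) : Prop :=
  ∀ μ ∈ spectrum ℂ (M.map Complex.ofReal), μ.re < 0

/-- The closed-loop matrix of two cascaded buck converters with CPLs, each
augmented with an output shunt resistor `R_s`, line resistance `R`, and
individual state feedbacks `f₁ = (f₁₁, f₁₂)`, `f₂ = (f₂₁, f₂₂)`. -/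
noncomputable def shuntRNetwork (D L C P Vbar₁ Vbar₂ Rs f₁₁ f₁₂ f₂₁ f₂₂ R : ℝ) :
    Matrix (Fin 4) (Fin 4) ℝ :=
  !![-(D * R / L) + Vbar₁ * f₁₁ / L, -(1 / L) + Vbar₁ * f₁₂ / L,
       -(D * R / L), 0;
     1 / C, P / (C * Vbar₁ ^ 2) - 1 / (C * Rs), 0, 0;
     -(D * R / L), 0, -(2 * D * R / L) + Vbar₂ * f₂₁ / L,
       -(1 / L) + Vbar₂ * f₂₂ / L;
     0, 0, 1 / C, P / (C * Vbar₂ ^ 2) - 1 / (C * Rs)]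

section Aux
open Polynomial Matrix

lemma det_fin_four' {R : Type*} [CommRing R] (M : Matrix (Fin 4) (Fin 4) R) :
    M.det = M 0 0*M 1 1*M 2 2*M 3 3 - M 0 0*M 1 1*M 2 3*M 3 2 - M 0 0*M 1 2*M 2 1*M 3 3 + M 0 0*M 1 2*M 2 3*M 3 1 + M 0 0*M 1 3*M 2 1*M 3 2 - M 0 0*M 1 3*M 2 2*M 3 1 - M 0 1*M 1 0*M 2 2*M 3 3 + M 0 1*M 1 0*M 2 3*M 3 2 + M 0 1*M 1 2*M 2 0*M 3 3 - M 0 1*M 1 2*M 2 3*M 3 0 - M 0 1*M 1 3*M 2 0*M 3 2 + M 0 1*M 1 3*M 2 2*M 3 0 + M 0 2*M 1 0*M 2 1*M 3 3 - M 0 2*M 1 0*M 2 3*M 3 1 - M 0 2*M 1 1*M 2 0*M 3 3 + M 0 2*M 1 1*M 2 3*M 3 0 + M 0 2*M 1 3*M 2 0*M 3 1 - M 0 2*M 1 3*M 2 1*M 3 0 - M 0 3*M 1 0*M 2 1*M 3 2 + M 0 3*M 1 0*M 2 2*M 3 1 + M 0 3*M 1 1*M 2 0*M 3 2 - M 0 3*M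 1 1*M 2 2*M 3 0 - M 0 3*M 1 2*M 2 0*M 3 1 + M 0 3*M 1 2*M 2 1*M 3 0 := by
  rw [Matrix.det_succ_row_zero]
  simp only [Fin.sum_univ_four, Matrix.det_fin_three, Matrix.submatrix_apply,
    show (Fin.succ 0 : Fin 4) = 1 from rfl, show (Fin.succ 1 : Fin 4) = 2 from rfl,
    show (Fin.succ 2 : Fin 4) = 3 from rfl,
    show ((0:Fin 4).succAbove 0) = 1 from rfl, show ((0:Fin 4).succAbove 1) = 2 from rfl,
    show ((0:Fin 4).succAbove 2) = 3 from rfl,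
    show ((1:Fin 4).succAbove 0) = 0 from rfl, show ((1:Fin 4).succAbove 1) = 2 from rfl,
    show ((1:Fin 4).succAbove 2) = 3 from rfl,
    show ((2:Fin 4).succAbove 0) = 0 from rfl, show ((2:Fin 4).succAbove 1) = 1 from rfl,
    show ((2:Fin 4).succAbove 2) = 3 from rfl,
    show ((3:Fin 4).succAbove 0) = 0 from rfl, show ((3:Fin 4).succAbove 1) = 1 from rfl,
    show ((3:Fin 4).succAbove 2) = 2 from rfl, show (((0:Fin 4)):ℕ) = 0 from rfl,
    show (((1:Fin 4)):ℕ) = 1 from rfl, show (((2:Fin 4)):ℕ) = 2 from rfl,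
    show (((3:Fin 4)):ℕ) = 3 from rfl]
  ring

lemma eval_charpoly' {n : Type*} [Fintype n] [DecidableEq n] {R : Type*} [CommRing R]
    (M : Matrix n n R) (x : R) :
    M.charpoly.eval x = (x • (1 : Matrix n n R) - M).det := by
  rw [Matrix.charpoly, ← Polynomial.coe_evalRingHom, RingHom.map_det]
  congr 1
  ext i j
  by_cases h : i = j <;>
    simp [h, Matrix.charmatrix_apply, Matrix.one_apply, Matrix.smul_apply, Matrix.sub_apply,
      Matrix.diagonal_apply]

noncomputable def Am (a b1 c1 b2 c2 d1 d2 iC R : ℝ) : Matrix (Fin 4) (Fin 4) ℝ :=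
  !![-(a*R) + b1, c1, -(a*R), 0;
     iC, d1, 0, 0;
     -(a*R), 0, -(2*(a*R)) + b2, c2;
     0, 0, iC, d2]

set_option maxHeartbeats 2000000 in
lemma detAm (a b1 c1 b2 c2 d1 d2 iC R x : ℝ) :
    (x • (1 : Matrix (Fin 4) (Fin 4) ℝ) - Am a b1 c1 b2 c2 d1 d2 iC R).det =
      x^4 + (3*R*a - b1 - b2 - d1 - d2)*x^3
      + (R*R*a*a - 2*R*a*b1 - R*a*b2 - 3*R*a*d1 - 3*R*a*d2 + b1*b2 + b1*d1 + b1*d2 + b2*d1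
          + b2*d2 - c1*iC - c2*iC + d1*d2)*x^2
      + (-(R*R*a*a*d1) - R*R*a*a*d2 + 2*R*a*b1*d1 + 2*R*a*b1*d2 + R*a*b2*d1 + R*a*b2*d2
          - 2*R*a*c1*iC - R*a*c2*iC + 3*R*a*d1*d2 - b1*b2*d1 - b1*b2*d2 + b1*c2*iC
          - b1*d1*d2 + b2*c1*iC - b2*d1*d2 + c1*d2*iC + c2*d1*iC)*x
      + (R*R*a*a*d1*d2 - 2*R*a*b1*d1*d2 - R*a*b2*d1*d2 + 2*R*a*c1*d2*iC + R*a*c2*d1*iC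
          + b1*b2*d1*d2 - b1*c2*d1*iC - b2*c1*d2*iC + c1*c2*iC*iC) := by
  have h : x • (1 : Matrix (Fin 4) (Fin 4) ℝ) - Am a b1 c1 b2 c2 d1 d2 iC R =
      !![x + a*R - b1, -c1, a*R, 0;
         -iC, x - d1, 0, 0;
         a*R, 0, x + 2*(a*R) - b2, -c2;
         0, 0, -iC, x - d2] := by
    ext i j
    fin_cases i <;> fin_cases j <;>
      simp [Am, Matrix.one_apply, Matrix.vecHead, Matrix.vecTail] <;> ring
  rw [h, det_fin_four']
  simp only [Matrix.cons_val', Matrix.cons_val_zero, Matrix.cons_val_one, Matrix.head_cons,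
    Matrix.empty_val', Matrix.cons_val_fin_one, Matrix.head_fin_const, Matrix.tail_cons,
    Matrix.cons_val_two, Matrix.cons_val_three, Matrix.of_apply]
  ring

lemma coeff_Am (a b1 c1 b2 c2 d1 d2 iC R : ℝ) :
    (Am a b1 c1 b2 c2 d1 d2 iC R).charpoly.coeff 1 =
      -(R*R*a*a*d1) - R*R*a*a*d2 + 2*R*a*b1*d1 + 2*R*a*b1*d2 + R*a*b2*d1 + R*a*b2*d2
        - 2*R*a*c1*iC - R*a*c2*iC + 3*R*a*d1*d2 - b1*b2*d1 - b1*b2*d2 + b1*c2*iC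
        - b1*d1*d2 + b2*c1*iC - b2*d1*d2 + c1*d2*iC + c2*d1*iC ∧
    (Am a b1 c1 b2 c2 d1 d2 iC R).charpoly.coeff 0 =
      R*R*a*a*d1*d2 - 2*R*a*b1*d1*d2 - R*a*b2*d1*d2 + 2*R*a*c1*d2*iC + R*a*c2*d1*iC
        + b1*b2*d1*d2 - b1*c2*d1*iC - b2*c1*d2*iC + c1*c2*iC*iC := by
  set p := (Am a b1 c1 b2 c2 d1 d2 iC R).charpoly with hp
  have hdeg : p.natDegree = 4 := by
    rw [hp, Matrix.charpoly_natDegree_eq_dim, Fintype.card_fin]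
  have hsum : ∀ x : ℝ,
      p.eval x = p.coeff 0 + p.coeff 1 * x + p.coeff 2 * x^2 + p.coeff 3 * x^3
        + p.coeff 4 * x^4 := by
    intro x
    rw [Polynomial.eval_eq_sum_range, hdeg]
    simp [Finset.sum_range_succ]
  have he : ∀ x : ℝ,
      p.coeff 0 + p.coeff 1 * x + p.coeff 2 * x^2 + p.coeff 3 * x^3 + p.coeff 4 * x^4 =
      x^4 + (3*R*a - b1 - b2 - d1 - d2)*x^3
      + (R*R*a*a - 2*R*a*b1 - R*a*b2 - 3*R*a*d1 - 3*R*a*d2 + b1*b2 + b1*d1 + b1*d2 + b2*d1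
          + b2*d2 - c1*iC - c2*iC + d1*d2)*x^2
      + (-(R*R*a*a*d1) - R*R*a*a*d2 + 2*R*a*b1*d1 + 2*R*a*b1*d2 + R*a*b2*d1 + R*a*b2*d2
          - 2*R*a*c1*iC - R*a*c2*iC + 3*R*a*d1*d2 - b1*b2*d1 - b1*b2*d2 + b1*c2*iC
          - b1*d1*d2 + b2*c1*iC - b2*d1*d2 + c1*d2*iC + c2*d1*iC)*x
      + (R*R*a*a*d1*d2 - 2*R*a*b1*d1*d2 - R*a*b2*d1*d2 + 2*R*a*c1*d2*iC + R*a*c2*d1*iC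
          + b1*b2*d1*d2 - b1*c2*d1*iC - b2*c1*d2*iC + c1*c2*iC*iC) := by
    intro x
    rw [← hsum, hp, eval_charpoly']
    exact detAm a b1 c1 b2 c2 d1 d2 iC R x
  constructor
  · linear_combination (8*(he 1) - 8*(he (-1)) + (he (-2)) - (he 2))/12
  · linear_combination he 0
lemma mem_spectrum_iff_root' {n : Type*} [Fintype n] [DecidableEq n]
    (B : Matrix n n ℂ) (μ : ℂ) :
    μ ∈ spectrum ℂ B ↔ B.charpoly.eval μ = 0 := by
  rw [spectrum.mem_iff, Matrix.isUnit_iff_isUnit_det, isUnit_iff_ne_zero, not_ne_iff,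
    eval_charpoly', Algebra.algebraMap_eq_smul_one]

lemma eval_zero_prod' (s : Multiset ℂ) :
    Polynomial.eval 0 ((s.map (fun μ => X - C μ)).prod) = (s.map (fun μ => -μ)).prod := by
  rw [Polynomial.eval_multiset_prod, Multiset.map_map]
  simp

lemma deriv_eval_zero' (s : Multiset ℂ) (hs : ∀ μ ∈ s, μ ≠ 0) :
    Polynomial.eval 0 (Polynomial.derivative ((s.map (fun μ => X - C μ)).prod)) =
      (s.map (fun μ => -μ)).prod * (s.map (fun μ => (-μ)⁻¹)).sum := by
  induction s using Multiset.induction with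
  | empty => simp
  | cons μ t ih =>
    have hμ : μ ≠ 0 := hs μ (Multiset.mem_cons_self _ _)
    have ht : ∀ ν ∈ t, ν ≠ 0 := fun ν hν => hs ν (Multiset.mem_cons_of_mem hν)
    simp only [Multiset.map_cons, Multiset.prod_cons, Multiset.sum_cons, derivative_mul,
      derivative_sub, derivative_X, derivative_C, sub_zero, one_mul, eval_add, eval_mul,
      eval_sub, eval_X, eval_C, zero_sub]
    rw [ih ht, eval_zero_prod']
    linear_combination (-(Multiset.map (fun μ => -μ) t).prod) * (mul_inv_cancel₀ hμ)

lemma multiset_sum_pos' (s : Multiset ℝ) (h : ∀ x ∈ s, 0 < x) (h0 : s ≠ 0) : 0 < s.sum := by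
  induction s using Multiset.induction with
  | empty => simp at h0
  | cons a t ih =>
    rw [Multiset.sum_cons]
    rcases eq_or_ne t 0 with rfl | ht
    · simpa using h a (Multiset.mem_cons_self _ _)
    · have h1 := ih (fun x hx => h x (Multiset.mem_cons_of_mem hx)) ht
      have h2 := h a (Multiset.mem_cons_self _ _)
      linarith

lemma exists_nonneg_re' (B : Matrix (Fin 4) (Fin 4) ℝ)
    (h0 : 0 < B.charpoly.coeff 0) (h1 : B.charpoly.coeff 1 < 0) :
    ∃ μ ∈ spectrum ℂ (B.map Complex.ofReal), 0 ≤ μ.re := by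
  by_contra hcon
  push_neg at hcon
  set q := (B.map Complex.ofReal).charpoly with hqdef
  have hq : q = B.charpoly.map Complex.ofRealHom := Matrix.charpoly_map B Complex.ofRealHom
  have hmonic : q.Monic := Matrix.charpoly_monic _
  have hdeg : q.natDegree = 4 := by
    rw [hqdef, Matrix.charpoly_natDegree_eq_dim, Fintype.card_fin]
  have hsplit : q = (q.roots.map (fun a => X - C a)).prod :=
    (IsAlgClosed.splits q).eq_prod_roots_of_monic hmonic
  have hre : ∀ μ ∈ q.roots, μ.re < 0 := by
    intro μ hμ
    exact hcon μ ((mem_spectrum_iff_root' _ μ).mpr ((Polynomial.mem_roots hmonic.ne_zero).mp hμ))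
  have hne : ∀ μ ∈ q.roots, μ ≠ 0 := by
    intro μ hμ h
    have := hre μ hμ
    rw [h] at this
    simp at this
  have hcard : Multiset.card q.roots = 4 := by
    rw [Polynomial.splits_iff_card_roots.mp (IsAlgClosed.splits q), hdeg]
  have hE : q.eval 0 = (q.roots.map (fun μ => -μ)).prod := by
    conv_lhs => rw [hsplit]
    exact eval_zero_prod' _
  have hD : q.derivative.eval 0 =
      (q.roots.map (fun μ => -μ)).prod * (q.roots.map (fun μ => (-μ)⁻¹)).sum := by
    conv_lhs => rw [hsplit]
    exact deriv_eval_zero' _ hne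
  have hE' : q.eval 0 = (B.charpoly.coeff 0 : ℂ) := by
    rw [← Polynomial.coeff_zero_eq_eval_zero, hq, Polynomial.coeff_map]
    simp
  have hD' : q.derivative.eval 0 = (B.charpoly.coeff 1 : ℂ) := by
    rw [← Polynomial.coeff_zero_eq_eval_zero, Polynomial.coeff_derivative, hq,
      Polynomial.coeff_map]
    simp
  set S := (q.roots.map (fun μ => (-μ)⁻¹)).sum with hSdef
  have hSre : 0 < S.re := by
    have hmap : S.re = ((q.roots.map (fun μ => (-μ)⁻¹)).map Complex.re).sum := by
      rw [hSdef]
      exact (Complex.reAddGroupHom.map_multiset_sum _)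
    rw [hmap, Multiset.map_map]
    apply multiset_sum_pos'
    · intro x hx
      obtain ⟨μ, hμ, rfl⟩ := Multiset.mem_map.mp hx
      have h1 := hre μ hμ
      have h2 : 0 < Complex.normSq μ := Complex.normSq_pos.mpr (hne μ hμ)
      simp only [Function.comp_apply, Complex.inv_re, Complex.neg_re, Complex.normSq_neg]
      exact div_pos (by linarith) h2
    · intro h
      rw [Multiset.map_eq_zero] at h
      rw [h] at hcard
      simp at hcard
  have hkey : (B.charpoly.coeff 1 : ℂ) = (B.charpoly.coeff 0 : ℂ) * S := by
    rw [← hD', hD, ← hE, hE']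
  have hkey_re : B.charpoly.coeff 1 = B.charpoly.coeff 0 * S.re := by
    have := congrArg Complex.re hkey
    simpa [Complex.mul_re] using this
  nlinarith


lemma choose_R (K1 K2 A1 A0 B1 B0 : ℝ) (hK1 : 0 < K1) (hK2 : 0 < K2) :
    ∃ R : ℝ, 0 < R ∧ -(K1 * R^2) + A1 * R + A0 < 0 ∧ 0 < K2 * R^2 + B1 * R + B0 := by
  obtain ⟨R, hR⟩ : ∃ R : ℝ, R = 1 + (|A1| + |A0|) / K1 + (|B1| + |B0|) / K2 := ⟨_, rfl⟩
  have h1 : 0 ≤ (|A1| + |A0|) / K1 := by positivity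
  have h2 : 0 ≤ (|B1| + |B0|) / K2 := by positivity
  have hR1 : 1 ≤ R := by rw [hR]; linarith
  have hR0 : 0 < R := lt_of_lt_of_le one_pos hR1
  have e1 : K1 * ((|A1| + |A0|) / K1) = |A1| + |A0| := by field_simp
  have e2 : K2 * ((|B1| + |B0|) / K2) = |B1| + |B0| := by field_simp
  have hK1R : K1 + |A1| + |A0| ≤ K1 * R := by
    have h3 : K1 * R = K1 + (|A1| + |A0|) + K1 * ((|B1| + |B0|) / K2) := by
      rw [hR, mul_add, mul_add, e1]; ring
    nlinarith [mul_nonneg hK1.le h2]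
  have hK2R : K2 + |B1| + |B0| ≤ K2 * R := by
    have h3 : K2 * R = K2 + K2 * ((|A1| + |A0|) / K1) + (|B1| + |B0|) := by
      rw [hR, mul_add, mul_add, e2]; ring
    nlinarith [mul_nonneg hK2.le h1]
  refine ⟨R, hR0, ?_, ?_⟩
  · nlinarith [mul_le_mul_of_nonneg_right hK1R hR0.le,
      mul_le_mul_of_nonneg_right (sub_nonneg.mpr (le_abs_self A1)) hR0.le,
      abs_nonneg A0, abs_nonneg A1, le_abs_self A0, mul_pos hK1 hR0,
      mul_le_mul_of_nonneg_right hR1 (abs_nonneg A0)]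
  · nlinarith [mul_le_mul_of_nonneg_right hK2R hR0.le,
      mul_le_mul_of_nonneg_right (sub_nonneg.mpr (neg_abs_le B1)) hR0.le,
      abs_nonneg B0, abs_nonneg B1, neg_abs_le B0, mul_pos hK2 hR0,
      mul_le_mul_of_nonneg_right hR1 (abs_nonneg B0)]

lemma Am_unstable (a b1 c1 b2 c2 d1 d2 iC : ℝ) (ha : 0 < a) (hd1 : 0 < d1) (hd2 : 0 < d2) :
    ∃ R : ℝ, 0 < R ∧ (Am a b1 c1 b2 c2 d1 d2 iC R).charpoly.coeff 1 < 0 ∧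
      0 < (Am a b1 c1 b2 c2 d1 d2 iC R).charpoly.coeff 0 := by
  have hK1 : 0 < a^2 * (d1 + d2) := by positivity
  have hK2 : 0 < a^2 * (d1 * d2) := by positivity
  obtain ⟨R, hR0, hlt, hgt⟩ := choose_R (a^2 * (d1 + d2)) (a^2 * (d1 * d2))
    (2*a*b1*d1 + 2*a*b1*d2 + a*b2*d1 + a*b2*d2 - 2*a*c1*iC - a*c2*iC + 3*a*d1*d2)
    (-(b1*b2*d1) - b1*b2*d2 + b1*c2*iC - b1*d1*d2 + b2*c1*iC - b2*d1*d2 + c1*d2*iC + c2*d1*iC)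
    (-(2*a*b1*d1*d2) - a*b2*d1*d2 + 2*a*c1*d2*iC + a*c2*d1*iC)
    (b1*b2*d1*d2 - b1*c2*d1*iC - b2*c1*d2*iC + c1*c2*iC*iC) hK1 hK2
  refine ⟨R, hR0, ?_, ?_⟩
  · rw [(coeff_Am a b1 c1 b2 c2 d1 d2 iC R).1]
    nlinarith [hlt]
  · rw [(coeff_Am a b1 c1 b2 c2 d1 d2 iC R).2]
    nlinarith [hgt]

end Aux

open Polynomial Matrix in

/-- Theorem 2 (output-shunt-resistor design): (a) if the shunt resistor is not
small enough to make the voltage-row diagonal entries negative, then for every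
individually stabilizing feedback there is a line resistance making the
network not Hurwitz; (b) if the shunt resistor is small enough
(`1/R_s > P/V̄ᵢ²`), the power dissipated in each shunt exceeds the load power
`P`, so at least half of the total power is lost in the shunts. -/
theorem shunt_resistor_design
    (D L C P Vbar₁ Vbar₂ Rs : ℝ) (hD : 0 < D ∧ D ≤ 1) (hL : 0 < L)
    (hC : 0 < C) (hP : 0 < P) (hV₁ : 0 < Vbar₁) (hV₂ : 0 < Vbar₂)
    (hRs : 0 < Rs) :
    ((0 < P / (C * Vbar₁ ^ 2) - 1 / (C * Rs) ∧
      0 < P / (C * Vbar₂ ^ 2) - 1 / (C * Rs)) →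
      ∀ f₁₁ f₁₂ f₂₁ f₂₂ : ℝ,
        Matrix.IsHurwitz
          !![Vbar₁ * f₁₁ / L, -(1 / L) + Vbar₁ * f₁₂ / L;
             1 / C, P / (C * Vbar₁ ^ 2) - 1 / (C * Rs)] →
        Matrix.IsHurwitz
          !![Vbar₂ * f₂₁ / L, -(1 / L) + Vbar₂ * f₂₂ / L;
             1 / C, P / (C * Vbar₂ ^ 2) - 1 / (C * Rs)] →
        ∃ R > (0 : ℝ),
          ¬ (shuntRNetwork D L C P Vbar₁ Vbar₂ Rs f₁₁ f₁₂ f₂₁ f₂₂ R).IsHurwitz ∧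
          ∃ μ ∈ spectrum ℂ
            ((shuntRNetwork D L C P Vbar₁ Vbar₂ Rs f₁₁ f₁₂ f₂₁ f₂₂ R).map
              Complex.ofReal), 0 ≤ μ.re) ∧
    ((P / Vbar₁ ^ 2 < 1 / Rs ∧ P / Vbar₂ ^ 2 < 1 / Rs) →
      P < Vbar₁ ^ 2 / Rs ∧ P < Vbar₂ ^ 2 / Rs) := by
  constructor
  · rintro ⟨hd1, hd2⟩ f₁₁ f₁₂ f₂₁ f₂₂ _ _
    have ha : 0 < D / L := div_pos hD.1 hL
    obtain ⟨Rv, hRv0, h1neg, h0pos⟩ := Am_unstable (D / L) (Vbar₁ * f₁₁ / L)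
      (-(1 / L) + Vbar₁ * f₁₂ / L) (Vbar₂ * f₂₁ / L) (-(1 / L) + Vbar₂ * f₂₂ / L)
      (P / (C * Vbar₁ ^ 2) - 1 / (C * Rs)) (P / (C * Vbar₂ ^ 2) - 1 / (C * Rs)) (1 / C)
      ha hd1 hd2
    have hmat : shuntRNetwork D L C P Vbar₁ Vbar₂ Rs f₁₁ f₁₂ f₂₁ f₂₂ Rv =
        Am (D / L) (Vbar₁ * f₁₁ / L) (-(1 / L) + Vbar₁ * f₁₂ / L) (Vbar₂ * f₂₁ / L)
          (-(1 / L) + Vbar₂ * f₂₂ / L) (P / (C * Vbar₁ ^ 2) - 1 / (C * Rs))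
          (P / (C * Vbar₂ ^ 2) - 1 / (C * Rs)) (1 / C) Rv := by
      ext i j
      fin_cases i <;> fin_cases j <;>
        simp [shuntRNetwork, Am, Matrix.vecHead, Matrix.vecTail] <;> ring
    obtain ⟨μ, hμmem, hμre⟩ := exists_nonneg_re' _ h0pos h1neg
    rw [← hmat] at hμmem
    refine ⟨Rv, hRv0, ?_, ⟨μ, hμmem, hμre⟩⟩
    intro hH
    exact absurd (hH μ hμmem) (not_lt.2 hμre)
  · rintro ⟨h1, h2⟩
    constructor
    · rw [div_lt_div_iff₀ (pow_pos hV₁ 2) hRs] at h1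
      rw [lt_div_iff₀ hRs]
      linarith
    · rw [div_lt_div_iff₀ (pow_pos hV₂ 2) hRs] at h2
      rw [lt_div_iff₀ hRs]
      linarith
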